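/- If n ∈ ℤ has canonical Fibonacci representation rep_F(n) of length 2k+1 with k ≥ 1, then there exist m ∈ ℤ and ℓ ∈ {0,1,2} such that rep_F(n) = rep_F(m) · h(ℓ), where h(0) = 00, h(1) = 01, h(2) = 10; moreover |rep_F(m)| = 2k−1, i.e., m ∈ I_{k−1} \ I_{k−2}. -/

import Mathlib

/-- Fibonacci sequence with `F 0 = 1`, `F 1 = 1`, `F 2 = 2`. -/
def F : ℕ → ℤ
  | 0 => 1
  | 1 => 1
  | (n+2) => F (n+1) + F n

/-- Numerical value of a binary digit. -/
def bv (x : Bool) : ℤ := if x then 1 else 0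

/-- Value of an odd-length binary word `w = w_{2k+1} ⋯ w_1` (most significant
digit first): `val_F(w) = Σ_{i=1}^{2k} w_i F_i − w_{2k+1} F_{2k}`. -/
def valF (w : List Bool) : ℤ :=
  (∑ i ∈ Finset.range (w.length - 1), bv (w.reverse.getD i false) * F (i+1))
    - bv (w.reverse.getD (w.length - 1) false) * F (w.length - 1)

/-- The word has no factor `11`. -/
def no11 (w : List Bool) : Prop :=
  List.Chain' (fun x y => ¬(x = true ∧ y = true)) w

/-- Words of the canonical representation language: odd length, no factor 11,
not beginning with 000 nor with 101. -/
def IsRep (w : List Bool) : Prop :=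
  Odd w.length ∧ no11 w ∧
    ¬ ([false, false, false] <+: w) ∧ ¬ ([true, false, true] <+: w)

/-- `Ik k = {i ∈ ℤ : −F_{2k} ≤ i < F_{2k+1}}`. -/
def Ik (k : ℕ) : Set ℤ := {i : ℤ | -F (2*k) ≤ i ∧ i < F (2*k+1)}

/-- Shifted version of `Ik` incorporating `I_{−1} = ∅`. -/
def Iext : ℕ → Set ℤ
  | 0 => ∅
  | (k+1) => Ik k

/-- The morphism `h : 0 ↦ 00, 1 ↦ 01, 2 ↦ 10` on single letters. -/
def h3 : Fin 3 → List Bool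
  | 0 => [false, false]
  | 1 => [false, true]
  | 2 => [true, false]

/- ### Auxiliary material -/

theorem F_pos : ∀ n, 0 < F n
  | 0 => one_pos
  | 1 => one_pos
  | (n+2) => by
      show 0 < F (n+1) + F n
      exact add_pos (F_pos (n+1)) (F_pos n)

theorem F_le_succ (n : ℕ) : F n ≤ F (n+1) := by
  cases n with
  | zero => exact le_refl _
  | succ m =>
      show F (m+1) ≤ F (m+1) + F m
      exact le_add_of_nonneg_right (F_pos m).le

theorem F_mono : Monotone F := monotone_nat_of_le_succ F_le_succ

theorem bv_nonneg (x : Bool) : 0 ≤ bv x := by cases x <;> simp [bv]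

theorem bv_le_one (x : Bool) : bv x ≤ 1 := by cases x <;> simp [bv]

/-- Plain (positive) value of a word, most significant digit first,
least significant digit has weight `F 1`. -/
def vp : List Bool → ℤ
  | [] => 0
  | d :: t => bv d * F (t.length + 1) + vp t

theorem vp_nonneg : ∀ l : List Bool, 0 ≤ vp l
  | [] => le_refl 0
  | d :: t => add_nonneg (mul_nonneg (bv_nonneg d) (F_pos _).le) (vp_nonneg t)

theorem no11_tail {a : Bool} {s : List Bool} (h : no11 (a :: s)) : no11 s :=
  List.IsChain.tail h

theorem F_add2 (n : ℕ) : F (n+2) = F (n+1) + F n := rfl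

theorem no11_pair {a b : Bool} {s : List Bool} (h : no11 (a :: b :: s)) :
    ¬(a = true ∧ b = true) :=
  (List.isChain_cons_cons.mp h).1

theorem vp_lt : ∀ l : List Bool, no11 l → vp l < F (l.length + 1)
  | [], _ => by
      show (0:ℤ) < F 1
      exact F_pos 1
  | [d], _ => by
      show bv d * F 1 + 0 < F 2
      have := bv_le_one d
      have h1 : F 1 = 1 := rfl
      have h2 : F 2 = 2 := rfl
      rw [h1, h2]
      nlinarith [bv_nonneg d]
  | (d :: e :: t), h => by
      cases d with
      | false =>
          have ih := vp_lt (e :: t) (no11_tail h)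
          show bv false * F ((e :: t).length + 1) + vp (e :: t) <
            F ((e :: t).length + 2)
          have : F ((e :: t).length + 1) ≤ F ((e :: t).length + 2) :=
            F_le_succ _
          simp only [bv, if_neg Bool.false_ne_true, zero_mul, zero_add]
          exact lt_of_lt_of_le ih this
      | true =>
          have he : e = false := by
            have := no11_pair h
            cases e
            · rfl
            · exact absurd ⟨rfl, rfl⟩ this
          subst he
          have ih := vp_lt t (no11_tail (no11_tail h))
          show bv true * F ((false :: t).length + 1) +
            (bv false * F (t.length + 1) + vp t) < F (t.length + 3)
          have hF : F (t.length + 3) = F (t.length + 2) + F (t.length + 1) := rfl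
          have hbt : bv true = (1:ℤ) := rfl
          have hbf : bv false = (0:ℤ) := rfl
          rw [hbt, hbf, hF, show (false :: t).length = t.length + 1 from rfl,
            show t.length+1+1 = t.length+2 from rfl]
          linarith

theorem vp_inj : ∀ u v : List Bool, no11 u → no11 v → u.length = v.length →
    vp u = vp v → u = v
  | [], [], _, _, _, _ => rfl
  | [], (b::t), _, _, hl, _ => by simp at hl
  | (a::s), [], _, _, hl, _ => by simp at hl
  | (a::s), (b::t), hu, hv, hl, hval => by
      have hst : s.length = t.length := by simpa using hl
      have key : ∀ (x y : List Bool), no11 x → no11 y → x.length = y.length →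
          vp (true :: x) ≠ vp (false :: y) := by
        intro x y hx hy hxy hne
        have h1 : vp (true :: x) = F (x.length + 1) + vp x := by
          show bv true * F (x.length + 1) + vp x = _
          simp [bv]
        have h2 : vp (false :: y) = vp y := by
          show bv false * F (y.length + 1) + vp y = _
          simp [bv]
        have h3 := vp_lt y hy
        have h4 := vp_nonneg x
        rw [h1, h2] at hne
        rw [← hxy] at h3
        linarith
      have hab : a = b := by
        cases a <;> cases b
        · rfl
        · exact absurd hval.symm (key t s (no11_tail hv) (no11_tail hu) hst.symm)
        · exact absurd hval (key s t (no11_tail hu) (no11_tail hv) hst)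
        · rfl
      subst hab
      have hv' : vp s = vp t := by
        have e1 : vp (a::s) = bv a * F (s.length + 1) + vp s := rfl
        have e2 : vp (a::t) = bv a * F (t.length + 1) + vp t := rfl
        rw [e1, e2, hst] at hval
        linarith
      rw [vp_inj s t (no11_tail hu) (no11_tail hv) hst hv']

theorem vp_eq_sum : ∀ t : List Bool,
    vp t = ∑ i ∈ Finset.range t.length, bv (t.reverse.getD i false) * F (i+1)
  | [] => by simp [vp]
  | (d :: t) => by
      have ih := vp_eq_sum t
      have hlen : (d::t).length = t.length + 1 := rfl
      rw [hlen, Finset.sum_range_succ]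
      have h2 : (d::t).reverse.getD t.length false = d := by
        rw [List.reverse_cons, List.getD_append_right _ _ _ _ (by simp)]
        simp
      have h1 : ∀ i ∈ Finset.range t.length,
          bv ((d::t).reverse.getD i false) * F (i+1)
            = bv (t.reverse.getD i false) * F (i+1) := by
        intro i hi
        rw [List.reverse_cons, List.getD_append _ _ _ _
          (by simpa using Finset.mem_range.mp hi)]
      rw [Finset.sum_congr rfl h1, h2]
      show bv d * F (t.length + 1) + vp t = _
      rw [ih]
      ring

theorem valF_cons (a : Bool) (t : List Bool) :
    valF (a :: t) = vp t - bv a * F t.length := by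
  unfold valF
  have hlen : (a::t).length - 1 = t.length := rfl
  rw [hlen, List.reverse_cons]
  rw [List.getD_append_right _ _ _ _ (le_of_eq (by simp))]
  simp only [List.length_reverse, Nat.sub_self, List.getD_cons_zero]
  congr 1
  rw [vp_eq_sum t]
  refine Finset.sum_congr rfl fun i hi => ?_
  rw [List.getD_append _ _ _ _ (by simpa using Finset.mem_range.mp hi)]

theorem valF_neg_of_true {s : List Bool} (h : no11 (true :: s)) :
    valF (true :: s) < 0 := by
  rw [valF_cons]
  have hb : bv true = 1 := rfl
  rw [hb, one_mul]
  have : vp s < F s.length := by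
    cases s with
    | nil => exact F_pos 0
    | cons c s₂ =>
        have hc : c = false := by
          have := no11_pair h
          cases c
          · rfl
          · exact absurd ⟨rfl, rfl⟩ this
        subst hc
        have e : vp (false :: s₂) = vp s₂ := by
          show bv false * F (s₂.length + 1) + vp s₂ = _
          simp [bv]
        rw [e]
        exact vp_lt s₂ (no11_tail (no11_tail h))
  linarith

theorem valF_nonneg_of_false (t : List Bool) : 0 ≤ valF (false :: t) := by
  rw [valF_cons]
  have hb : bv false = 0 := rfl
  rw [hb, zero_mul, sub_zero]
  exact vp_nonneg t

/-- Range lemma: a canonical word of length `2j+1` has value in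
`I_j` and (if `j ≥ 1`) outside `I_{j-1}`. -/
theorem valF_range : ∀ (j : ℕ) (w : List Bool), IsRep w → w.length = 2*j+1 →
    valF w ∈ Ik j ∧ ∀ j', j = j' + 1 → valF w ∉ Ik j' := by
  intro j w hw hl
  obtain ⟨hodd, h11, h000, h101⟩ := hw
  cases w with
  | nil => simp at hl
  | cons a s =>
    have hslen : s.length = 2*j := by simpa using hl
    cases j with
    | zero =>
        have hs : s = [] := by
          have : s.length = 0 := by simpa using hslen
          exact List.length_eq_zero_iff.mp this
        subst hs
        constructor
        · constructor
          · show -F 0 ≤ valF [a]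
            rw [valF_cons]
            have : vp ([] : List Bool) = 0 := rfl
            rw [this]
            have h0 : F 0 = 1 := rfl
            have := bv_le_one a
            simp only [List.length_nil, h0]
            linarith
          · show valF [a] < F 1
            rw [valF_cons]
            have : vp ([] : List Bool) = 0 := rfl
            rw [this]
            have h0 : F 0 = 1 := rfl
            have h1 : F 1 = 1 := rfl
            have := bv_nonneg a
            simp only [List.length_nil, h0, h1]
            linarith
        · intro j' hj'
          omega
    | succ jj =>
        obtain ⟨b, c, s₃, rfl⟩ : ∃ b c s₃, s = b :: c :: s₃ := by
          cases s with
          | nil => simp at hslen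
          | cons b s' =>
            cases s' with
            | nil => simp at hslen; omega
            | cons c s₃ => exact ⟨b, c, s₃, rfl⟩
        have hs₃len : s₃.length = 2*jj := by
          simp at hslen; omega
        rw [valF_cons]
        have hFlen : (b :: c :: s₃).length = 2*jj + 2 := by simp [hs₃len]
        rw [hFlen]
        cases a with
        | true =>
            have hb : b = false := by
              have := no11_pair h11
              cases b
              · rfl
              · exact absurd ⟨rfl, rfl⟩ this
            subst hb
            have hc : c = false := by
              cases c
              · rfl
              · exact absurd ⟨s₃, rfl⟩ h101
            subst hc
            have evp : vp (false :: false :: s₃) = vp s₃ := by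
              show bv false * _ + (bv false * _ + vp s₃) = vp s₃
              simp [bv]
            rw [evp]
            have hbv : bv true = 1 := rfl
            rw [hbv, one_mul]
            have hub : vp s₃ < F (2*jj + 1) := by
              have := vp_lt s₃ (no11_tail (no11_tail (no11_tail h11)))
              rwa [hs₃len] at this
            have hlb := vp_nonneg s₃
            have f2 : F (2*jj+2) = F (2*jj+1) + F (2*jj) := F_add2 (2*jj)
            have f3 : F (2*jj+3) = F (2*jj+2) + F (2*jj+1) := by
              have := F_add2 (2*jj+1)
              rwa [show 2*jj+1+2 = 2*jj+3 from by omega,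
                show 2*jj+1+1 = 2*jj+2 from by omega] at this
            have hFpos := F_pos (2*jj)
            have hFpos1 := F_pos (2*jj+1)
            constructor
            · constructor
              · show -F (2*(jj+1)) ≤ _
                rw [show 2*(jj+1) = 2*jj+2 from by ring]
                linarith
              · show _ < F (2*(jj+1)+1)
                rw [show 2*(jj+1)+1 = 2*jj+3 from by ring]
                linarith
            · intro j' hj'
              intro hmem
              have hj'' : j' = jj := by omega
              rw [hj''] at hmem
              obtain ⟨hm1, hm2⟩ := hmem
              linarith
        | false =>
            have hbv : bv false = 0 := rfl
            rw [hbv, zero_mul, sub_zero]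
            have hbc : ¬(b = false ∧ c = false) := by
              intro ⟨hb, hc⟩
              subst hb; subst hc
              exact h000 ⟨s₃, rfl⟩
            have hub : vp (b :: c :: s₃) < F (2*jj + 3) := by
              have := vp_lt (b :: c :: s₃) (no11_tail h11)
              rwa [hFlen] at this
            have hlb : F (2*jj + 1) ≤ vp (b :: c :: s₃) := by
              have e : vp (b :: c :: s₃)
                  = bv b * F (s₃.length + 2) + (bv c * F (s₃.length + 1) + vp s₃) := rfl
              rw [e, hs₃len]
              have hnn := vp_nonneg s₃
              cases b with
              | true =>
                  have h1 : bv true = 1 := rfl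
                  have h2 := bv_nonneg c
                  have h3 := F_pos (2*jj+1)
                  have h4 : F (2*jj+1) ≤ F (2*jj+2) := F_le_succ _
                  nlinarith [F_pos (2*jj+2)]
              | false =>
                  have hc : c = true := by
                    cases c
                    · exact absurd ⟨rfl, rfl⟩ hbc
                    · rfl
                  subst hc
                  have h1 : bv false = 0 := rfl
                  have h2 : bv true = 1 := rfl
                  rw [h1, h2]
                  linarith
            constructor
            · constructor
              · show -F (2*(jj+1)) ≤ _
                have := F_pos (2*(jj+1))
                have := vp_nonneg (b :: c :: s₃)
                linarith
              · show _ < F (2*(jj+1)+1)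
                have : 2*(jj+1)+1 = 2*jj+3 := by ring
                rw [this]
                exact hub
            · intro j' hj'
              intro hmem
              have hj'' : j' = jj := by omega
              rw [hj''] at hmem
              obtain ⟨hm1, hm2⟩ := hmem
              linarith

theorem Ik_mono {j j' : ℕ} (h : j ≤ j') : Ik j ⊆ Ik j' := by
  intro i ⟨h1, h2⟩
  constructor
  · have : F (2*j) ≤ F (2*j') := F_mono (by omega)
    linarith
  · have : F (2*j+1) ≤ F (2*j'+1) := F_mono (by omega)
    linarith

/-- Uniqueness of canonical representations. -/
theorem rep_unique : ∀ x y : List Bool, IsRep x → IsRep y → valF x = valF y → x = y := by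
  have len_eq : ∀ x y : List Bool, IsRep x → IsRep y → valF x = valF y →
      ∀ jx jy, x.length = 2*jx+1 → y.length = 2*jy+1 → ¬ jx < jy := by
    intro x y hx hy hval jx jy hlx hly hlt
    obtain ⟨jy', rfl⟩ : ∃ jy', jy = jy' + 1 := ⟨jy - 1, by omega⟩
    have hxmem : valF x ∈ Ik jx := (valF_range jx x hx hlx).1
    have hynotmem : valF y ∉ Ik jy' := (valF_range _ y hy hly).2 jy' rfl
    have : valF x ∈ Ik jy' := Ik_mono (by omega) hxmem
    rw [hval] at this
    exact hynotmem this
  intro x y hx hy hval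
  obtain ⟨jx, hlx⟩ := hx.1
  obtain ⟨jy, hly⟩ := hy.1
  have hjeq : jx = jy := by
    rcases lt_trichotomy jx jy with h | h | h
    · exact absurd h (len_eq x y hx hy hval jx jy hlx hly)
    · exact h
    · exact absurd h (len_eq y x hy hx hval.symm jy jx hly hlx)
  subst hjeq
  -- now same length; induct structure
  have hlen : x.length = y.length := by rw [hlx, hly]
  clear hlx hly len_eq
  cases x with
  | nil => cases y with
    | nil => rfl
    | cons b t => simp at hlen
  | cons a s =>
    cases y with
    | nil => simp at hlen
    | cons b t =>
      have hst : s.length = t.length := by simpa using hlen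
      have h11x : no11 (a :: s) := hx.2.1
      have h11y : no11 (b :: t) := hy.2.1
      have hab : a = b := by
        cases a <;> cases b
        · rfl
        · have h1 := valF_nonneg_of_false s
          have h2 := valF_neg_of_true h11y
          rw [hval] at h1
          linarith
        · have h1 := valF_neg_of_true h11x
          have h2 := valF_nonneg_of_false t
          rw [← hval] at h2
          linarith
        · rfl
      subst hab
      have : vp s = vp t := by
        rw [valF_cons, valF_cons, hst] at hval
        linarith
      rw [vp_inj s t (no11_tail h11x) (no11_tail h11y) hst this]

/-- If `rep_F(n)` has length `2k+1` with `k ≥ 1`, then `rep_F(n) = rep_F(m)·h(ℓ)`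
for some `m ∈ I_{k−1} \ I_{k−2}` and some `ℓ ∈ {0,1,2}`. -/
theorem repF_decomposition (repF : ℤ → List Bool)
    (hrep : ∀ n : ℤ, IsRep (repF n) ∧ valF (repF n) = n)
    (n : ℤ) (k : ℕ) (hk : 1 ≤ k) (hlen : (repF n).length = 2*k+1) :
    ∃ m : ℤ, ∃ ℓ : Fin 3,
      repF n = repF m ++ h3 ℓ ∧ (repF m).length = 2*k-1
        ∧ m ∈ Iext k \ Iext (k-1) := by
  obtain ⟨k', rfl⟩ : ∃ k', k = k' + 1 := ⟨k - 1, by omega⟩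
  set u := repF n with hu
  have hurep : IsRep u := (hrep n).1
  set w := u.take (2*(k'+1)-1) with hw
  set r := u.drop (2*(k'+1)-1) with hr
  have hwr : w ++ r = u := List.take_append_drop _ _
  have hwlen : w.length = 2*(k'+1)-1 := by
    rw [hw, List.length_take, hlen]
    omega
  have hrlen : r.length = 2 := by
    rw [hr, List.length_drop, hlen]
    omega
  obtain ⟨d2, d1, hd⟩ := List.length_eq_two.mp hrlen
  -- not both ones
  have hnot11 : ¬(d2 = true ∧ d1 = true) := by
    have hsuf : [d2, d1] <:+ u := ⟨w, by rw [← hd, hwr]⟩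
    have := List.IsChain.suffix hurep.2.1 hsuf
    exact (List.isChain_cons_cons.mp this).1
  -- w is a canonical word
  have hwpre : w <+: u := List.take_prefix _ _
  have hwrep : IsRep w := by
    refine ⟨⟨k', by omega⟩, List.IsChain.prefix hurep.2.1 hwpre, ?_, ?_⟩
    · intro hp
      exact hurep.2.2.1 (hp.trans hwpre)
    · intro hp
      exact hurep.2.2.2 (hp.trans hwpre)
  set m := valF w with hm
  have hrepm : repF m = w := by
    apply rep_unique
    · exact (hrep m).1
    · exact hwrep
    · rw [(hrep m).2]
  have hrange := valF_range k' w hwrep (by omega)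
  have hmIk : m ∈ Ik k' := hrange.1
  have hmnot : m ∉ Iext k' := by
    cases k' with
    | zero => simp [Iext]
    | succ k'' =>
        show m ∉ Ik k''
        exact hrange.2 k'' rfl
  -- choose ℓ
  have main : ∀ ℓ : Fin 3, h3 ℓ = [d2, d1] →
      ∃ m : ℤ, ∃ ℓ : Fin 3,
        repF n = repF m ++ h3 ℓ ∧ (repF m).length = 2*(k'+1)-1
          ∧ m ∈ Iext (k'+1) \ Iext (k'+1-1) := by
    intro ℓ hℓ
    refine ⟨m, ℓ, ?_, ?_, ?_⟩
    · rw [hrepm, hℓ, ← hd, hwr]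
    · rw [hrepm, hwlen]
    · refine ⟨?_, ?_⟩
      · show m ∈ Ik k'
        exact hmIk
      · show m ∉ Iext (k'+1-1)
        simpa using hmnot
  cases d2 with
  | false =>
      cases d1 with
      | false => exact main 0 rfl
      | true => exact main 1 rfl
  | true =>
      cases d1 with
      | false => exact main 2 rfl
      | true => exact absurd ⟨rfl, rfl⟩ hnot11
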